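/- Let G be a finite p-group (p a prime) and suppose |G| = m_1 · m_2 · ⋯ · m_k, where k ≥ 3 and each m_i is an integer greater than 1. Then there exist subsets A_1, …, A_k of G that form a complete factorization of G with |A_i| = m_i for all i = 1, …, k. -/

import Mathlib

open Subgroup QuotientGroup

/-- Subsets `A 0, …, A (k-1)` of a group `G` form a complete factorization of `G` if they are
pairwise disjoint and every element `g ∈ G` is uniquely represented as
`g = a_0 * a_1 * ⋯ * a_(k-1)` with `a_i ∈ A i` for each `i`. -/
def IsCompleteFactorization {G : Type*} [Group G] {k : ℕ} (A : Fin k → Set G) : Prop :=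
  (∀ i j : Fin k, i ≠ j → Disjoint (A i) (A j)) ∧
  ∀ g : G, ∃! f : Fin k → G, (∀ i, f i ∈ A i) ∧ (List.ofFn f).prod = g


theorem sigma_exists {G : Type*} [Group G] (K K' : Subgroup G) :
    ∃ σ : G → G, (∀ g ∈ K', σ g ∈ K') ∧ (∀ g ∈ K', (σ g)⁻¹ * g ∈ K) ∧
      (∀ g g', g ∈ K' → g' ∈ K' → g⁻¹ * g' ∈ K → σ g = σ g') := by
  classical
  let f : G ⧸ K → G := fun q => if h : ∃ x : G, (x : G ⧸ K) = q ∧ x ∈ K' then h.choose else 1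
  refine ⟨fun g => f (g : G ⧸ K), ?_, ?_, ?_⟩
  · intro g hg
    have hex : ∃ x : G, (x : G ⧸ K) = (g : G ⧸ K) ∧ x ∈ K' := ⟨g, rfl, hg⟩
    simp only [f, dif_pos hex]
    exact hex.choose_spec.2
  · intro g hg
    have hex : ∃ x : G, (x : G ⧸ K) = (g : G ⧸ K) ∧ x ∈ K' := ⟨g, rfl, hg⟩
    simp only [f, dif_pos hex]
    exact QuotientGroup.eq.mp hex.choose_spec.1
  · intro g g' _ _ hgg'
    have : (g : G ⧸ K) = (g' : G ⧸ K) := QuotientGroup.eq.mpr hgg'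
    show f ((g : G ⧸ K)) = f ((g' : G ⧸ K))
    rw [this]

theorem sigma_exists_avoid {G : Type*} [Group G] (K : Subgroup G) (B : Set G)
    (hB : ∀ q : G ⧸ K, ∃ x : G, (x : G ⧸ K) = q ∧ x ∉ B) :
    ∃ σ : G → G, (∀ g, (σ g)⁻¹ * g ∈ K) ∧ (∀ g, σ g ∉ B) ∧
      (∀ g g', g⁻¹ * g' ∈ K → σ g = σ g') := by
  refine ⟨fun g => (hB (g : G ⧸ K)).choose, ?_, ?_, ?_⟩
  · intro g
    exact QuotientGroup.eq.mp (hB (g : G ⧸ K)).choose_spec.1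
  · intro g
    exact (hB (g : G ⧸ K)).choose_spec.2
  · intro g g' hgg'
    have : (g : G ⧸ K) = (g' : G ⧸ K) := QuotientGroup.eq.mpr hgg'
    show (hB ((g : G ⧸ K))).choose = (hB ((g' : G ⧸ K))).choose
    simp only [this]

theorem transversal_card {G : Type*} [Group G] [Finite G] (K K' : Subgroup G) (hle : K ≤ K')
    (σ : G → G) (hmem : ∀ g ∈ K', σ g ∈ K') (hcoset : ∀ g ∈ K', (σ g)⁻¹ * g ∈ K)
    (hconst : ∀ g g', g ∈ K' → g' ∈ K' → g⁻¹ * g' ∈ K → σ g = σ g') :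
    {x : G | x ∈ K' ∧ σ x = x}.ncard * Nat.card K = Nat.card K' := by
  classical
  set S := {x : G | x ∈ K' ∧ σ x = x} with hS
  have hbij : Function.Bijective (fun z : S × K => (⟨z.1.1 * z.2.1,
      mul_mem z.1.2.1 (hle z.2.2)⟩ : K')) := by
    constructor
    · rintro ⟨⟨s, hs⟩, ⟨h, hh⟩⟩ ⟨⟨s', hs'⟩, ⟨h', hh'⟩⟩ heq
      have heq' : s * h = s' * h' := congrArg Subtype.val heq
      have hcos : s⁻¹ * s' ∈ K := by
        have h2 : s⁻¹ * s' = h * h'⁻¹ := by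
          have : s⁻¹ * (s * h) = s⁻¹ * (s' * h') := by rw [heq']
          rw [← mul_assoc, inv_mul_cancel, one_mul] at this
          rw [this]
          group
        rw [h2]; exact mul_mem hh (inv_mem hh')
      have hss' : s = s' := by
        have h1 := hconst s s' hs.1 hs'.1 hcos
        rw [hs.2, hs'.2] at h1; exact h1
      subst hss'
      have : h = h' := by
        have := mul_left_cancel heq'
        exact this
      simp [this]
    · rintro ⟨g, hg⟩
      refine ⟨⟨⟨σ g, hmem g hg, ?_⟩, ⟨(σ g)⁻¹ * g, hcoset g hg⟩⟩, ?_⟩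
      · exact (hconst (σ g) g (hmem g hg) hg (hcoset g hg)).trans rfl
      · ext; simp
  have := Nat.card_congr (Equiv.ofBijective _ hbij)
  rw [Nat.card_prod] at this
  rw [← Nat.card_coe_set_eq, this]

theorem telescope_prod {G : Type*} [Group G] :
    ∀ (n : ℕ) (t : Fin n → G) (w : ℕ → G),
      (List.ofFn fun i : Fin n => (w i.val)⁻¹ * t i * w (i.val + 1)).prod =
        (w 0)⁻¹ * (List.ofFn t).prod * w n := by
  intro n
  induction n with
  | zero => intro t w; simp
  | succ n ih =>
    intro t w
    rw [List.ofFn_succ, List.ofFn_succ (f := t)]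
    simp only [List.prod_cons, Fin.val_zero, Fin.val_succ]
    have := ih (fun i => t i.succ) (fun j => w (j + 1))
    rw [this]
    group

theorem sum_le_prod_of_two_le (s : Finset ℕ) (f : ℕ → ℕ) (hf : ∀ i ∈ s, 2 ≤ f i) :
    ∑ i ∈ s, f i ≤ ∏ i ∈ s, f i := by
  classical
  induction s using Finset.cons_induction with
  | empty => simp
  | cons a s ha ih =>
    rw [Finset.sum_cons, Finset.prod_cons]
    have h2 : 2 ≤ f a := hf a (Finset.mem_cons_self a s)
    have ihs := ih fun i hi => hf i (Finset.mem_cons_of_mem hi)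
    rcases Finset.eq_empty_or_nonempty s with rfl | hne
    · simp
    · have hP : 2 ≤ ∏ i ∈ s, f i := by
        obtain ⟨b, hb⟩ := hne
        calc 2 ≤ f b := hf b (Finset.mem_cons_of_mem hb)
        _ ≤ ∏ i ∈ s, f i := Finset.single_le_prod' (fun i hi => le_trans (by norm_num)
            (hf i (Finset.mem_cons_of_mem hi))) hb
      nlinarith [Finset.prod_nonneg (s := s) (f := fun i => (f i : ℕ)) (fun i _ => Nat.zero_le _)]

theorem ncard_biUnion_le {G : Type*} [Finite G] (s : Finset ℕ) (f : ℕ → Set G) :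
    (⋃ i ∈ s, f i).ncard ≤ ∑ i ∈ s, (f i).ncard := by
  classical
  induction s using Finset.cons_induction with
  | empty => simp
  | cons a s ha ih =>
    rw [Finset.sum_cons]
    have : (⋃ i ∈ Finset.cons a s ha, f i) = f a ∪ ⋃ i ∈ s, f i := by
      simp [Set.iUnion_or, Set.iUnion_union_distrib]
    rw [this]
    exact le_trans (Set.ncard_union_le _ _) (by omega)

theorem aux_step {G : Type*} [Group G] [Finite G] {p : ℕ} (hp : p.Prime) (hpG : IsPGroup p G)
    (N : Subgroup G) (hN : N.Normal) (hNT : N ≠ ⊤) :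
    ∃ N' : Subgroup G, N ≤ N' ∧ N'.Normal ∧ Nat.card N' = p * Nat.card N := by
  haveI := hN
  haveI : Fact p.Prime := ⟨hp⟩
  have hQ : IsPGroup p (G ⧸ N) := hpG.to_quotient N
  have hnt : Nontrivial (G ⧸ N) := by
    obtain ⟨g, hg⟩ : ∃ g, g ∉ N := by
      by_contra h
      push_neg at h
      exact hNT (Subgroup.eq_top_iff' N |>.mpr h)
    exact ⟨⟨(g : G ⧸ N), 1, by simpa [QuotientGroup.eq_one_iff] using hg⟩⟩
  have hZnt : Nontrivial (Subgroup.center (G ⧸ N)) := hQ.center_nontrivial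
  have hZp : IsPGroup p (Subgroup.center (G ⧸ N)) := hQ.to_subgroup _
  have hdvd : p ∣ Nat.card (Subgroup.center (G ⧸ N)) := by
    obtain ⟨n, hn⟩ := IsPGroup.iff_card.mp hZp
    rcases n with _ | n
    · rw [pow_zero] at hn
      exact absurd hn (Finite.one_lt_card_iff_nontrivial.mpr hZnt).ne'
    · exact hn ▸ dvd_pow_self p n.succ_ne_zero
  obtain ⟨z, hz⟩ := exists_prime_orderOf_dvd_card' p hdvd
  set x : G ⧸ N := (z : G ⧸ N) with hxdef
  have hxord : orderOf x = p := by
    rw [← hz]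
    exact orderOf_injective (Subgroup.center (G ⧸ N)).subtype Subtype.coe_injective z
  have hxcen : x ∈ Subgroup.center (G ⧸ N) := z.2
  have hWnorm : (zpowers x).Normal := by
    constructor
    intro w hw g
    have : g * w * g⁻¹ = w := by
      have hwc : w ∈ Subgroup.center (G ⧸ N) := Subgroup.zpowers_le.mpr hxcen hw
      have := Subgroup.mem_center_iff.mp hwc g
      rw [this]
      group
    rwa [this]
  refine ⟨(zpowers x).comap (QuotientGroup.mk' N), ?_, hWnorm.comap _, ?_⟩
  · intro n hn
    simp only [Subgroup.mem_comap, mk'_apply]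
    have : ((n : G) : G ⧸ N) = 1 := (QuotientGroup.eq_one_iff n).mpr hn
    rw [this]; exact one_mem _
  · have hset : ((zpowers x).comap (QuotientGroup.mk' N) : Set G)
        = QuotientGroup.mk ⁻¹' ((zpowers x : Set (G ⧸ N))) := rfl
    have h2 : Nat.card ((zpowers x).comap (QuotientGroup.mk' N)) =
        Nat.card (QuotientGroup.mk ⁻¹' ((zpowers x : Set (G ⧸ N)))) := by
      rfl
    have h3 := Nat.card_congr (preimageMkEquivSubgroupProdSet N ((zpowers x : Set (G ⧸ N))))
    rw [h2, h3, Nat.card_prod, mul_comm]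
    congr 1
    have : Nat.card ((zpowers x : Set (G ⧸ N))) = Nat.card (zpowers x) := rfl
    rw [this, Nat.card_zpowers x, hxord]
theorem aux_chain {G : Type*} [Group G] [Finite G] {p n : ℕ} (hp : p.Prime) (hpG : IsPGroup p G)
    (hn : Nat.card G = p ^ n) :
    ∃ L : ℕ → Subgroup G, L 0 = ⊥ ∧ (∀ j, (L j).Normal) ∧ (∀ j, L j ≤ L (j + 1)) ∧
      (∀ j, j ≤ n → Nat.card ↥(L j) = p ^ j) := by
  classical
  let step : Subgroup G → Subgroup G := fun N =>
    if h : N.Normal ∧ N ≠ ⊤ then (aux_step hp hpG N h.1 h.2).choose else N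
  have hstep_le : ∀ N, N ≤ step N := by
    intro N
    by_cases h : N.Normal ∧ N ≠ ⊤
    · simp only [step, dif_pos h]
      exact (aux_step hp hpG N h.1 h.2).choose_spec.1
    · simp only [step, dif_neg h]
      exact le_rfl
  have hstep_norm : ∀ N, N.Normal → (step N).Normal := by
    intro N hN
    by_cases h : N.Normal ∧ N ≠ ⊤
    · simp only [step, dif_pos h]
      exact (aux_step hp hpG N h.1 h.2).choose_spec.2.1
    · simpa only [step, dif_neg h]
  have hstep_card : ∀ N, N.Normal → N ≠ ⊤ → Nat.card (step N) = p * Nat.card N := by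
    intro N hN hNT
    simp only [step, dif_pos (And.intro hN hNT)]
    exact (aux_step hp hpG N hN hNT).choose_spec.2.2
  let L : ℕ → Subgroup G := fun j => Nat.rec (⊥ : Subgroup G) (fun _ ih => step ih) j
  have hL0 : L 0 = ⊥ := rfl
  have hLs : ∀ j, L (j + 1) = step (L j) := fun j => rfl
  have key : ∀ j, (L j).Normal ∧ (j ≤ n → Nat.card ↥(L j) = p ^ j) := by
    intro j
    induction j with
    | zero => exact ⟨by rw [hL0]; infer_instance, fun _ => by rw [hL0, Subgroup.card_bot, pow_zero]⟩
    | succ j ih =>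
      refine ⟨by rw [hLs]; exact hstep_norm _ ih.1, fun hj => ?_⟩
      have hjn : j < n := hj
      have hcard : Nat.card ↥(L j) = p ^ j := ih.2 hjn.le
      have hne : L j ≠ ⊤ := by
        intro htop
        rw [htop, Subgroup.card_top, hn] at hcard
        have := Nat.pow_lt_pow_right hp.one_lt hjn
        omega
      rw [hLs, hstep_card _ ih.1 hne, hcard, pow_succ, mul_comm]
  exact ⟨L, hL0, fun j => (key j).1, fun j => hstep_le _, fun j hj => (key j).2 hj⟩

theorem chain_decomp {G : Type*} [Group G] (K : ℕ → Subgroup G) (σ : ℕ → G → G)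
    (hK0 : K 0 = ⊥) (hmono : ∀ j, K j ≤ K (j + 1))
    (hσmem : ∀ j g, g ∈ K (j + 1) → σ (j + 1) g ∈ K (j + 1))
    (hσcoset : ∀ j g, g ∈ K (j + 1) → (σ (j + 1) g)⁻¹ * g ∈ K j)
    (hσconst : ∀ j g g', g ∈ K (j + 1) → g' ∈ K (j + 1) → g⁻¹ * g' ∈ K j →
      σ (j + 1) g = σ (j + 1) g') :
    ∀ n (g : G), g ∈ K n → ∃! t : Fin n → G,
      (∀ i : Fin n, t i ∈ K (n - i.val) ∧ σ (n - i.val) (t i) = t i) ∧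
        (List.ofFn t).prod = g := by
  have hMono : Monotone K := monotone_nat_of_le_succ hmono
  intro n
  induction n with
  | zero =>
    intro g hg
    rw [hK0, Subgroup.mem_bot] at hg
    refine ⟨fun i => i.elim0, ⟨fun i => i.elim0, by simp [hg]⟩, fun y _ => funext fun i => i.elim0⟩
  | succ n ih =>
    intro g hg
    set s := σ (n + 1) g with hs
    have hsmem : s ∈ K (n + 1) := hσmem n g hg
    have hh : s⁻¹ * g ∈ K n := hσcoset n g hg
    obtain ⟨t', ⟨ht'mem, ht'prod⟩, ht'uniq⟩ := ih (s⁻¹ * g) hh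
    have hsfix : σ (n + 1) s = s := (hσconst n s g hsmem hg hh).trans hs.symm
    refine ⟨Fin.cons s t', ⟨?_, ?_⟩, ?_⟩
    · intro i
      refine Fin.cases ?_ ?_ i
      · simpa using ⟨hsmem, hsfix⟩
      · intro j
        simp only [Fin.cons_succ, Fin.val_succ, Nat.succ_sub_succ]
        exact ht'mem j
    · rw [List.ofFn_succ]
      simp only [Fin.cons_zero, Fin.cons_succ, List.prod_cons]
      rw [ht'prod]
      group
    · intro u ⟨humem, huprod⟩
      have htail : ∀ i : Fin n, Fin.tail u i ∈ K (n - i.val) ∧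
          σ (n - i.val) (Fin.tail u i) = Fin.tail u i := by
        intro i
        have := humem i.succ
        simpa only [Fin.val_succ, Nat.succ_sub_succ, Fin.tail] using this
      have htailprod_mem : (List.ofFn (Fin.tail u)).prod ∈ K n := by
        apply Subgroup.list_prod_mem
        intro x hx
        obtain ⟨i, rfl⟩ := List.mem_ofFn.mp hx
        exact hMono (by omega : n - i.val ≤ n) (htail i).1
      have hu0K : u 0 ∈ K (n + 1) := by simpa using (humem 0).1
      have hu0fix : σ (n + 1) (u 0) = u 0 := by simpa using (humem 0).2
      have hsplit : g = u 0 * (List.ofFn (Fin.tail u)).prod := by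
        rw [← huprod, List.ofFn_succ]
        simp only [List.prod_cons]
        rfl
      have hu0 : u 0 = s := by
        rw [← hu0fix, hs]
        exact hσconst n (u 0) g hu0K hg (by rw [hsplit]; group; simpa using htailprod_mem)
      have htprod : (List.ofFn (Fin.tail u)).prod = s⁻¹ * g := by
        rw [hsplit, hu0]; group
      have := ht'uniq (Fin.tail u) ⟨htail, htprod⟩
      rw [← Fin.cons_self_tail u, hu0, this]

theorem complete_factorization_of_pGroup {G : Type*} [Group G] [Finite G]
    {p : ℕ} (hp : p.Prime) (hpG : IsPGroup p G)
    {k : ℕ} (hk : 3 ≤ k) (m : Fin k → ℕ) (hm : ∀ i, 1 < m i)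
    (hcard : Nat.card G = ∏ i, m i) :
    ∃ A : Fin k → Set G, IsCompleteFactorization A ∧ ∀ i, (A i).ncard = m i := by
  classical
  haveI : Fact p.Prime := ⟨hp⟩
  obtain ⟨n, hn⟩ := IsPGroup.iff_card.mp hpG
  -- extend m to ℕ
  set m' : ℕ → ℕ := fun i => if h : i < k then m ⟨i, h⟩ else 1 with hm'def
  have hm'eq : ∀ i : Fin k, m' i.val = m i := by
    intro i
    simp only [hm'def, i.isLt, dif_pos, Fin.eta]
  have hm'2 : ∀ i, i < k → 2 ≤ m' i := by
    intro i hi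
    have := hm ⟨i, hi⟩
    simp only [hm'def, hi, dif_pos]
    omega
  have hprodG : ∏ i ∈ Finset.range k, m' i = Nat.card G := by
    rw [hcard, ← Fin.prod_univ_eq_prod_range m' k]
    exact Finset.prod_congr rfl fun i _ => hm'eq i
  -- exponents
  have hexp : ∀ i : ℕ, ∃ e : ℕ, i < k → 1 ≤ e ∧ m' i = p ^ e := by
    intro i
    by_cases hi : i < k
    · have hdvd : m' i ∣ Nat.card G := by
        rw [← hprodG]
        exact Finset.dvd_prod_of_mem m' (Finset.mem_range.mpr hi)
      rw [hn] at hdvd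
      obtain ⟨e, hle, he⟩ := (Nat.dvd_prime_pow hp).mp hdvd
      refine ⟨e, fun _ => ⟨?_, he⟩⟩
      rcases Nat.eq_zero_or_pos e with rfl | hpos
      · rw [pow_zero] at he
        have := hm'2 i hi
        omega
      · exact hpos
    · exact ⟨0, fun h => absurd h hi⟩
  choose e' he' using hexp
  set E : ℕ → ℕ := fun j => ∑ i ∈ Finset.Ico (k - j) k, e' i with hEdef
  have hE0 : E 0 = 0 := by simp [hEdef]
  have hEmono : Monotone E := by
    intro a b hab
    apply Finset.sum_le_sum_of_subset
    exact Finset.Ico_subset_Ico (by omega) le_rfl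
  have hEk' : ∀ j, k ≤ j → E j = E k := by
    intro j hj
    simp only [hEdef, Nat.sub_eq_zero_of_le hj, Nat.sub_self]
  have hpEk : p ^ E k = Nat.card G := by
    rw [hEdef]
    simp only [Nat.sub_self]
    rw [← Finset.prod_pow_eq_pow_sum, ← Finset.range_eq_Ico, ← hprodG]
    exact Finset.prod_congr rfl fun i hi => ((he' i (Finset.mem_range.mp hi)).2).symm
  have hEkn : E k = n := Nat.pow_right_injective hp.two_le (by show p ^ E k = p ^ n; rw [hpEk, hn])
  have hEle : ∀ j, E j ≤ n := by
    intro j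
    rcases le_total j k with h | h
    · rw [← hEkn]; exact hEmono h
    · rw [hEk' j h, hEkn]
  have hElt : ∀ a, a < k → E a < E (a + 1) := by
    intro a ha
    have h1 : k - (a + 1) < k := by omega
    have h2 : E (a + 1) = e' (k - (a + 1)) + E a := by
      have hrw : k - (a + 1) + 1 = k - a := by omega
      simp only [hEdef]
      rw [Finset.sum_eq_sum_Ico_succ_bot (show k - (a + 1) < k by omega), hrw]
    have := (he' (k - (a + 1)) h1).1
    omega
  obtain ⟨L, hL0, hLnorm, hLmono, hLcard⟩ := aux_chain hp hpG hn
  have hLMono : Monotone L := monotone_nat_of_le_succ hLmono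
  set K : ℕ → Subgroup G := fun j => L (E j) with hKdef
  have hK0 : K 0 = ⊥ := by rw [hKdef]; simp only; rw [hE0]; exact hL0
  have hKMono : ∀ {a b : ℕ}, a ≤ b → K a ≤ K b := fun h => hLMono (hEmono h)
  have hKnormal : ∀ j, (K j).Normal := fun j => hLnorm _
  have hKcard : ∀ j, Nat.card ↥(K j) = p ^ E j := fun j => hLcard _ (hEle j)
  have hKprod : ∀ j, j ≤ k → Nat.card ↥(K j) = ∏ i ∈ Finset.Ico (k - j) k, m' i := by
    intro j hj
    rw [hKcard, hEdef]
    simp only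
    rw [← Finset.prod_pow_eq_pow_sum]
    refine Finset.prod_congr rfl fun i hi => ?_
    exact ((he' i (Finset.mem_Ico.mp hi).2).2).symm
  have hKtop : ∀ j, k ≤ j → K j = ⊤ := by
    intro j hj
    apply Subgroup.eq_top_of_card_eq
    rw [hKcard, hEk' j hj, hEkn, hn]
  have hKlt : ∀ a, a < k → ∃ x, x ∈ K (a + 1) ∧ x ∉ K a := by
    intro a ha
    have hne : K a ≠ K (a + 1) := by
      intro h
      have hc := hKcard a
      rw [h, hKcard (a + 1)] at hc
      have := Nat.pow_right_injective hp.two_le hc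
      have := hElt a ha
      omega
    have hlt : K a < K (a + 1) := lt_of_le_of_ne (hKMono (by omega)) hne
    exact SetLike.exists_of_lt hlt
  have hvex : ∀ j, 1 ≤ j ∧ j ≤ k - 1 → ∃ x, x ∈ K (k - j + 1) ∧ x ∉ K (k - j) := by
    rintro j ⟨h1, h2⟩
    exact hKlt (k - j) (by omega)
  set v : ℕ → G := fun j => if h : 1 ≤ j ∧ j ≤ k - 1 then (hvex j h).choose else 1 with hvdef
  have hv0 : v 0 = 1 := by simp [hvdef]
  have hvk : v k = 1 := by
    simp only [hvdef]
    rw [dif_neg (by omega)]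
  have hvmem : ∀ j (h : 1 ≤ j ∧ j ≤ k - 1), v j ∈ K (k - j + 1) ∧ v j ∉ K (k - j) := by
    intro j h
    simp only [hvdef]
    rw [dif_pos h]
    exact (hvex j h).choose_spec
  have hvK : ∀ j, 1 ≤ j → j ≤ k → v j ∈ K (k - j + 1) := by
    intro j h1 h2
    rcases eq_or_lt_of_le h2 with rfl | hlt
    · rw [hvk]; exact one_mem _
    · exact (hvmem j ⟨h1, by omega⟩).1
  -- low-level representative functions
  have hσlowex := fun j : ℕ => sigma_exists (K (j - 1)) (K j)
  choose σlow hσl1 hσl2 hσl3 using hσlowex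
  set SL : ℕ → Set G := fun j => {x | x ∈ K j ∧ σlow j x = x} with hSLdef
  have hSLsub : ∀ j, ∀ x ∈ SL j, x ∈ K j := fun j x hx => hx.1
  have hSLncard : ∀ j, 1 ≤ j → j ≤ k → (SL j).ncard = m' (k - j) := by
    intro j h1 h2
    have h := transversal_card (K (j - 1)) (K j) (hKMono (by omega)) (σlow j)
      (hσl1 j) (hσl2 j) (hσl3 j)
    rw [hKprod j h2, hKprod (j - 1) (by omega)] at h
    rw [show k - (j - 1) = (k - j) + 1 by omega] at h
    rw [Finset.prod_eq_prod_Ico_succ_bot (by omega : k - j < k) m'] at h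
    have hpos : 0 < ∏ i ∈ Finset.Ico (k - j + 1) k, m' i :=
      Finset.prod_pos fun i hi => by have := hm'2 i (Finset.mem_Ico.mp hi).2; omega
    have hSeq : {x : G | x ∈ K j ∧ σlow j x = x} = SL j := by rw [hSLdef]
    rw [hSeq] at h
    exact Nat.eq_of_mul_eq_mul_right hpos h
  set AA : ℕ → Set G := fun i => (fun x => (v i)⁻¹ * x * v (i + 1)) '' SL (k - i) with hAAdef
  have hinj : ∀ a b : G, Function.Injective (fun x : G => a * x * b) := by
    intro a b x y h
    simp only at h
    exact mul_left_cancel (mul_right_cancel h)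
  have hAAncard : ∀ i, 1 ≤ i → i ≤ k - 1 → (AA i).ncard = m' i := by
    intro i h1 h2
    rw [hAAdef]
    simp only
    rw [Set.ncard_image_of_injective _ (hinj _ _), hSLncard (k - i) (by omega) (by omega)]
    congr 1
    omega
  have hAAstrip : ∀ i, 1 ≤ i → i ≤ k - 1 → ∀ y ∈ AA i, y ∈ K (k - i + 1) ∧ y ∉ K (k - i) := by
    intro i h1 h2 y hy
    obtain ⟨x, hx, rfl⟩ := hy
    have hxK : x ∈ K (k - i) := hSLsub _ _ hx
    have hvi1 : v (i + 1) ∈ K (k - i) := by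
      have h := hvK (i + 1) (by omega) (by omega)
      rwa [show k - (i + 1) + 1 = k - i by omega] at h
    have hvi := hvmem i ⟨h1, h2⟩
    constructor
    · exact mul_mem (mul_mem (inv_mem hvi.1) (hKMono (by omega) hxK))
        (hKMono (by omega) hvi1)
    · intro hmem
      apply hvi.2
      have hrw : v i = (x * v (i + 1)) * ((v i)⁻¹ * x * v (i + 1))⁻¹ := by group
      rw [hrw]
      exact mul_mem (mul_mem hxK hvi1) (inv_mem hmem)
  set Bad : Set G := ⋃ i ∈ Finset.Ico 1 k, AA i with hBaddef
  set BadRep : Set G := {x | x * v 1 ∈ Bad} with hBadRepdef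
  haveI hNk1 : (K (k - 1)).Normal := hKnormal _
  set π : G →* G ⧸ K (k - 1) := QuotientGroup.mk' (K (k - 1)) with hπdef
  have hπ1 : ∀ x ∈ K (k - 1), π x = 1 := fun x hx => (QuotientGroup.eq_one_iff x).mpr hx
  have hv1 := hvmem 1 ⟨le_rfl, by omega⟩
  have hπv1 : π (v 1) ≠ 1 := by
    intro h
    have := (QuotientGroup.eq_one_iff (v 1)).mp h
    rw [show k - 1 = k - 1 from rfl] at this
    exact hv1.2 this
  have hπvj : ∀ j, 2 ≤ j → π (v j) = 1 := by
    intro j hj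
    by_cases hle : j ≤ k - 1
    · exact hπ1 _ (hKMono (by omega : k - j + 1 ≤ k - 1) (hvmem j ⟨by omega, hle⟩).1)
    · simp only [hvdef]
      rw [dif_neg (by omega)]
      exact map_one π
  set q1 : G ⧸ K (k - 1) := (π (v 1))⁻¹ with hq1def
  set q2 : G ⧸ K (k - 1) := (π (v 1))⁻¹ * (π (v 1))⁻¹ with hq2def
  have hq12 : q1 ≠ q2 := by
    intro h
    apply hπv1
    rw [hq1def, hq2def] at h
    have h1 : (π (v 1))⁻¹ = 1 := right_eq_mul.mp h
    exact inv_eq_one.mp h1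
  have hπAA : ∀ i, 1 ≤ i → i < k → ∀ y ∈ AA i, π y = (π (v i))⁻¹ * π (v (i + 1)) := by
    intro i h1 h2 y hy
    obtain ⟨x, hx, rfl⟩ := hy
    have hxK : x ∈ K (k - 1) := hKMono (by omega : k - i ≤ k - 1) (hSLsub _ _ hx)
    simp only [map_mul, map_inv]
    rw [hπ1 x hxK, mul_one]
  have hBadRepπ : ∀ x ∈ BadRep,
      (π x = q1 ∧ ∃ i ∈ Finset.Ico 2 k, x * v 1 ∈ AA i) ∨ (π x = q2 ∧ x * v 1 ∈ AA 1) := by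
    intro x hx
    rw [hBadRepdef, Set.mem_setOf_eq, hBaddef] at hx
    obtain ⟨i, hi, hmem⟩ := Set.mem_iUnion₂.mp hx
    obtain ⟨hi1, hik⟩ := Finset.mem_Ico.mp hi
    have hπy := hπAA i hi1 hik _ hmem
    have hπx : π x = (π (v i))⁻¹ * π (v (i + 1)) * (π (v 1))⁻¹ := by
      have hmul : π (x * v 1) = π x * π (v 1) := map_mul π x (v 1)
      rw [hπy] at hmul
      rw [hmul]
      group
    rcases eq_or_lt_of_le hi1 with heq | hlt
    · right
      subst heq
      refine ⟨?_, hmem⟩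
      rw [hπx, hπvj 2 le_rfl, mul_one, hq2def]
    · left
      refine ⟨?_, ⟨i, Finset.mem_Ico.mpr ⟨hlt, hik⟩, hmem⟩⟩
      rw [hπx, hπvj i hlt, hπvj (i + 1) (by omega), inv_one, one_mul, one_mul, hq1def]

  have hπmk : ∀ x : G, π x = (x : G ⧸ K (k - 1)) := fun x => rfl
  have hCcard : ∀ q : G ⧸ K (k - 1),
      (QuotientGroup.mk ⁻¹' {q} : Set G).ncard = Nat.card ↥(K (k - 1)) := by
    intro q
    have h1 := Nat.card_congr (preimageMkEquivSubgroupProdSet (K (k - 1)) {q})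
    rw [Nat.card_prod] at h1
    have h2 : Nat.card ↥({q} : Set (G ⧸ K (k - 1))) = 1 := Nat.card_unique
    rw [h2, mul_one] at h1
    rw [← Nat.card_coe_set_eq]
    exact h1
  have hKk1prod : Nat.card ↥(K (k - 1)) = ∏ i ∈ Finset.Ico 1 k, m' i := by
    have h := hKprod (k - 1) (by omega)
    rwa [show k - (k - 1) = 1 by omega] at h
  have hprod2pos : 0 < ∏ i ∈ Finset.Ico 2 k, m' i :=
    Finset.prod_pos fun i hi => by have := hm'2 i (Finset.mem_Ico.mp hi).2; omega
  have hsum2 : ∑ i ∈ Finset.Ico 2 k, m' i ≤ ∏ i ∈ Finset.Ico 2 k, m' i :=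
    sum_le_prod_of_two_le _ _ fun i hi => hm'2 i (Finset.mem_Ico.mp hi).2
  have hIco1 : ∏ i ∈ Finset.Ico 1 k, m' i = m' 1 * ∏ i ∈ Finset.Ico 2 k, m' i :=
    Finset.prod_eq_prod_Ico_succ_bot (by omega : 1 < k) m'
  have hm'1ge : 2 ≤ m' 1 := hm'2 1 (by omega)
  have hprod2ge2 : 2 ≤ ∏ i ∈ Finset.Ico 2 k, m' i := by
    calc 2 ≤ m' 2 := hm'2 2 (by omega)
    _ ≤ ∏ i ∈ Finset.Ico 2 k, m' i :=
      Finset.single_le_prod' (fun i hi => by have := hm'2 i (Finset.mem_Ico.mp hi).2; omega)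
        (Finset.mem_Ico.mpr ⟨le_rfl, by omega⟩)
  have hfeas : ∀ q : G ⧸ K (k - 1), ∃ x : G, (x : G ⧸ K (k - 1)) = q ∧ x ∉ BadRep := by
    intro q
    by_cases hq : q = q1 ∨ q = q2
    · have hDsub : ∀ x, x ∈ BadRep → (QuotientGroup.mk x : G ⧸ K (k - 1)) = q →
          x ∈ (if q = q1 then ⋃ i ∈ Finset.Ico 2 k, (fun y => y * (v 1)⁻¹) '' AA i
               else (fun y => y * (v 1)⁻¹) '' AA 1) := by
        intro x hxB hxq
        have hπx : π x = q := hxq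
        rcases hBadRepπ x hxB with ⟨hx1, i, hi, hmem⟩ | ⟨hx2, hmem⟩
        · have hqq : q = q1 := by rw [← hπx, hx1]
          rw [if_pos hqq]
          exact Set.mem_biUnion hi ⟨x * v 1, hmem, by group⟩
        · have hqq : q = q2 := by rw [← hπx, hx2]
          have hnq1 : ¬ q = q1 := by rw [hqq]; exact fun hh => hq12 hh.symm
          rw [if_neg hnq1]
          exact ⟨x * v 1, hmem, by group⟩
      set D : Set G := (if q = q1 then ⋃ i ∈ Finset.Ico 2 k, (fun y => y * (v 1)⁻¹) '' AA i
               else (fun y => y * (v 1)⁻¹) '' AA 1) with hDdef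
      have hDcard : D.ncard < (QuotientGroup.mk ⁻¹' {q} : Set G).ncard := by
        rw [hCcard q, hKk1prod, hIco1]
        by_cases hq1c : q = q1
        · rw [hDdef, if_pos hq1c]
          calc (⋃ i ∈ Finset.Ico 2 k, (fun y => y * (v 1)⁻¹) '' AA i).ncard
              ≤ ∑ i ∈ Finset.Ico 2 k, ((fun y => y * (v 1)⁻¹) '' AA i).ncard :=
                ncard_biUnion_le _ _
            _ = ∑ i ∈ Finset.Ico 2 k, m' i := by
                refine Finset.sum_congr rfl fun i hi => ?_
                obtain ⟨h2i, hik⟩ := Finset.mem_Ico.mp hi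
                rw [Set.ncard_image_of_injective _ (mul_left_injective ((v 1)⁻¹))]
                exact hAAncard i (by omega) (by omega)
            _ ≤ ∏ i ∈ Finset.Ico 2 k, m' i := hsum2
            _ < m' 1 * ∏ i ∈ Finset.Ico 2 k, m' i := by
                calc ∏ i ∈ Finset.Ico 2 k, m' i = 1 * ∏ i ∈ Finset.Ico 2 k, m' i :=
                      (one_mul _).symm
                _ < m' 1 * ∏ i ∈ Finset.Ico 2 k, m' i :=
                      (Nat.mul_lt_mul_right hprod2pos).mpr (by omega)
        · rw [hDdef, if_neg hq1c]
          rw [Set.ncard_image_of_injective _ (mul_left_injective ((v 1)⁻¹))]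
          rw [hAAncard 1 le_rfl (by omega)]
          nlinarith [hprod2ge2, hm'1ge]
      have hnsub : ¬ (QuotientGroup.mk ⁻¹' {q} : Set G) ⊆ D := by
        intro hsub
        have := Set.ncard_le_ncard hsub (Set.toFinite D)
        omega
      obtain ⟨x, hxC, hxD⟩ := Set.not_subset.mp hnsub
      have hxq : (x : G ⧸ K (k - 1)) = q := hxC
      exact ⟨x, hxq, fun hxB => hxD (hDsub x hxB hxq)⟩
    · push_neg at hq
      refine ⟨(q.out : G), QuotientGroup.out_eq' q, fun hB => ?_⟩
      rcases hBadRepπ _ hB with ⟨h1, _⟩ | ⟨h2, _⟩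
      · exact hq.1 (by rw [← h1, hπmk]; exact (QuotientGroup.out_eq' q).symm)
      · exact hq.2 (by rw [← h2, hπmk]; exact (QuotientGroup.out_eq' q).symm)
  obtain ⟨σtop, hst1, hst2, hst3⟩ := sigma_exists_avoid (K (k - 1)) BadRep hfeas
  set σ' : ℕ → G → G := fun j => if j = k then σtop else
      if 1 ≤ j ∧ j ≤ k - 1 then σlow j else fun _ => 1 with hσ'def
  have hσ'low : ∀ j, 1 ≤ j → j ≤ k - 1 → σ' j = σlow j := by
    intro j h1 h2
    simp only [hσ'def]
    rw [if_neg (by omega), if_pos ⟨h1, h2⟩]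
  have hσ'top : σ' k = σtop := by simp [hσ'def]
  have hd1 : ∀ j (g : G), g ∈ K (j + 1) → σ' (j + 1) g ∈ K (j + 1) := by
    intro j g hg
    by_cases hjk : j + 1 = k
    · rw [hjk, hσ'top, hKtop k le_rfl]; exact mem_top _
    · by_cases hj2 : j + 1 ≤ k - 1
      · rw [hσ'low (j + 1) (by omega) hj2]; exact hσl1 (j + 1) g hg
      · have hσj : σ' (j + 1) = fun _ => 1 := by
          simp only [hσ'def]; rw [if_neg hjk, if_neg (by omega)]
        rw [hσj]; exact one_mem _
  have hd2 : ∀ j (g : G), g ∈ K (j + 1) → (σ' (j + 1) g)⁻¹ * g ∈ K j := by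
    intro j g hg
    by_cases hjk : j + 1 = k
    · have hj : j = k - 1 := by omega
      rw [hjk, hσ'top, hj]
      exact hst1 g
    · by_cases hj2 : j + 1 ≤ k - 1
      · have h := hσl2 (j + 1) g hg
        rw [Nat.add_sub_cancel] at h
        rwa [hσ'low (j + 1) (by omega) hj2]
      · have hσj : σ' (j + 1) = fun _ => 1 := by
          simp only [hσ'def]; rw [if_neg hjk, if_neg (by omega)]
        rw [hσj, hKtop j (by omega)]
        exact mem_top _
  have hd3 : ∀ j (g g' : G), g ∈ K (j + 1) → g' ∈ K (j + 1) → g⁻¹ * g' ∈ K j →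
      σ' (j + 1) g = σ' (j + 1) g' := by
    intro j g g' hg hg' hgg'
    by_cases hjk : j + 1 = k
    · have hj : j = k - 1 := by omega
      rw [hjk, hσ'top]
      exact hst3 g g' (by rw [← hj]; exact hgg')
    · by_cases hj2 : j + 1 ≤ k - 1
      · rw [hσ'low (j + 1) (by omega) hj2]
        exact hσl3 (j + 1) g g' hg hg' (by rwa [Nat.add_sub_cancel])
      · have hσj : σ' (j + 1) = fun _ => 1 := by
          simp only [hσ'def]; rw [if_neg hjk, if_neg (by omega)]
        rw [hσj]
  have hdec := chain_decomp K σ' hK0 (fun j => hKMono (Nat.le_succ j)) hd1 hd2 hd3 k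
  set S' : ℕ → Set G := fun j => {x : G | x ∈ K j ∧ σ' j x = x} with hS'def
  have hS'low : ∀ j, 1 ≤ j → j ≤ k - 1 → S' j = SL j := by
    intro j h1 h2
    rw [hS'def, hSLdef]
    simp only [hσ'low j h1 h2]
  set Afin : Fin k → Set G :=
    fun i => (fun x => (v i.val)⁻¹ * x * v (i.val + 1)) '' S' (k - i.val) with hAfindef
  have hAfinAA : ∀ i : Fin k, 1 ≤ i.val → Afin i = AA i.val := by
    intro i h1
    have hik : i.val ≤ k - 1 := by have := i.isLt; omega
    rw [hAfindef, hAAdef]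
    simp only
    rw [hS'low (k - i.val) (by omega) (by omega)]
  have hA0 : ∀ (i : Fin k), i.val = 0 → ∀ y ∈ Afin i, y ∉ Bad := by
    intro i h0 y hy
    obtain ⟨x, hx, rfl⟩ := hy
    have hxS : x ∈ S' k := by
      rw [show k - i.val = k by omega] at hx
      exact hx
    have hfix : σtop x = x := by
      have h := hxS.2
      rwa [hσ'top] at h
    have hxnB : x ∉ BadRep := by rw [← hfix]; exact hst2 x
    intro hyB
    apply hxnB
    have hyx : (v i.val)⁻¹ * x * v (i.val + 1) = x * v 1 := by
      rw [h0, hv0, inv_one, one_mul]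
    have hyB' : (v i.val)⁻¹ * x * v (i.val + 1) ∈ Bad := hyB
    rw [hyx] at hyB'
    exact hyB'
  have hkey : ∀ a b : Fin k, a.val < b.val → Disjoint (Afin a) (Afin b) := by
    intro a b hab
    rw [Set.disjoint_left]
    intro y hya hyb
    have hb1 : 1 ≤ b.val := by omega
    have hbk : b.val ≤ k - 1 := by have := b.isLt; omega
    have hyb' : y ∈ AA b.val := by rw [← hAfinAA b hb1]; exact hyb
    by_cases ha0 : a.val = 0
    · exact hA0 a ha0 y hya
        (by rw [hBaddef]; exact Set.mem_biUnion (Finset.mem_Ico.mpr ⟨hb1, b.isLt⟩) hyb')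
    · have ha1 : 1 ≤ a.val := by omega
      have hya' : y ∈ AA a.val := by rw [← hAfinAA a ha1]; exact hya
      have hsa := hAAstrip a.val ha1 (by have := a.isLt; omega) y hya'
      have hsb := hAAstrip b.val hb1 hbk y hyb'
      exact hsa.2 (hKMono (by omega : k - b.val + 1 ≤ k - a.val) hsb.1)
  refine ⟨Afin, ⟨?_, ?_⟩, ?_⟩
  · intro i j hij
    rcases lt_or_gt_of_ne (fun h : i.val = j.val => hij (Fin.ext h)) with h | h
    · exact hkey i j h
    · exact (hkey j i h).symm
  · intro g
    obtain ⟨t, ⟨htmem, htprod⟩, htuniq⟩ := hdec g (by rw [hKtop k le_rfl]; exact mem_top g)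
    refine ⟨fun i => (v i.val)⁻¹ * t i * v (i.val + 1), ⟨?_, ?_⟩, ?_⟩
    · intro i
      exact ⟨t i, htmem i, rfl⟩
    · rw [telescope_prod k t v, hv0, hvk, inv_one, one_mul, mul_one]
      exact htprod
    · rintro f' ⟨hf'mem, hf'prod⟩
      have hf'eq : ∀ i : Fin k, ∃ x, (x ∈ S' (k - i.val)) ∧
          f' i = (v i.val)⁻¹ * x * v (i.val + 1) := by
        intro i
        obtain ⟨x, hx, he⟩ := hf'mem i
        exact ⟨x, hx, he.symm⟩
      choose x' hx'mem hx'eq using hf'eq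
      have hofn : (List.ofFn f') =
          List.ofFn (fun i : Fin k => (v i.val)⁻¹ * x' i * v (i.val + 1)) := by
        congr 1
        funext i
        exact hx'eq i
      have hxprod : (List.ofFn x').prod = g := by
        have ht := telescope_prod k x' v
        rw [hv0, hvk, inv_one, one_mul, mul_one] at ht
        rw [← ht, ← hofn]
        exact hf'prod
      have huniq := htuniq x' ⟨fun i => hx'mem i, hxprod⟩
      funext i
      rw [hx'eq i, huniq]
  · intro i
    by_cases h0 : i.val = 0
    · rw [hAfindef]
      simp only
      rw [Set.ncard_image_of_injective _ (hinj _ _)]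
      rw [show k - i.val = k by omega]
      have htc := transversal_card (K (k - 1)) (K k) (hKMono (by omega)) (σ' k)
        (fun g _hg => by rw [hKtop k le_rfl]; exact mem_top _)
        (fun g _hg => by rw [hσ'top]; exact hst1 g)
        (fun g g' _ _ hgg' => by rw [hσ'top]; exact hst3 g g' hgg')
      rw [hKprod k le_rfl, hKk1prod] at htc
      rw [show k - k = 0 by omega] at htc
      rw [Finset.prod_eq_prod_Ico_succ_bot (show 0 < k by omega) m'] at htc
      rw [show (0 : ℕ) + 1 = 1 from rfl] at htc
      have hpos1 : 0 < ∏ i ∈ Finset.Ico 1 k, m' i :=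
        Finset.prod_pos fun i hi => by have := hm'2 i (Finset.mem_Ico.mp hi).2; omega
      have hfin := Nat.eq_of_mul_eq_mul_right hpos1 htc
      rw [hS'def]
      simp only
      rw [hfin, ← hm'eq i, h0]
    · have h1 : 1 ≤ i.val := by omega
      rw [hAfinAA i h1, hAAncard i.val h1 (by have := i.isLt; omega), ← hm'eq i]
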